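/- The G-preorder is finite: for every timed automaton A (possibly with diagonal constraints), with G its least-fixpoint constraint map, every infinite sequence (q_1, Z_1), (q_2, Z_2), … of symbolic states of A contains indices i < j with q_i = q_j and (q_j, Z_j) ≼_G (q_i, Z_i), where ≼_G is extended to zones by (q,Z) ≼_G (q,Z') iff for all v ∈ Z there is v' ∈ Z' with (q,v) ≼_G (q,v'). -/

import Mathlib

open Classical

namespace Timed

/-- A clock valuation assigns a nonnegative real to every clock. -/
abbrev Val (X : Type) := X → NNReal

/-- Time elapse on valuations: `(v+δ)(x) = v(x)+δ`. -/
noncomputable def addVal {X : Type} (v : Val X) (δ : NNReal) : Val X := fun x => v x + δ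

/-- Reset of the clocks in `Y` to `0`. -/
noncomputable def resetVal {X : Type} (Y : Set X) (v : Val X) : Val X :=
  fun x => if x ∈ Y then 0 else v x

/-- Comparison operators `<, ≤, =, ≥, >`. -/
inductive CmpOp | lt | le | eq | ge | gt

def CmpOp.holds : CmpOp → ℝ → ℝ → Prop
  | .lt, a, b => a < b
  | .le, a, b => a ≤ b
  | .eq, a, b => a = b
  | .ge, a, b => a ≥ b
  | .gt, a, b => a > b

/-- Clock constraints: finite conjunctions of `x ⋈ c` and `x - y ⋈ c` (and `true`). -/
inductive ClockConstraint (X : Type) where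
  | tt : ClockConstraint X
  | single : X → CmpOp → ℤ → ClockConstraint X
  | diag : X → X → CmpOp → ℤ → ClockConstraint X
  | conj : ClockConstraint X → ClockConstraint X → ClockConstraint X

def ClockConstraint.sat {X : Type} (v : Val X) : ClockConstraint X → Prop
  | .tt => True
  | .single x op c => op.holds (v x : ℝ) (c : ℝ)
  | .diag x y op c => op.holds ((v x : ℝ) - (v y : ℝ)) (c : ℝ)
  | .conj g₁ g₂ => g₁.sat v ∧ g₂.sat v

/-- `⟦g⟧`, the set of valuations satisfying `g`. -/
def sem {X : Type} (g : ClockConstraint X) : Set (Val X) := {v | g.sat v}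

/-- A zone is a set of valuations definable by a clock constraint. -/
def IsZone {X : Type} (Z : Set (Val X)) : Prop := ∃ g : ClockConstraint X, Z = sem g

/-- Future (time elapse) of a set of valuations. -/
def future {X : Type} (W : Set (Val X)) : Set (Val X) :=
  {w | ∃ v ∈ W, ∃ δ : NNReal, w = addVal v δ}

/-- Reset of a set of valuations: `[Y]W`. -/
def resetSet {X : Type} (Y : Set X) (W : Set (Val X)) : Set (Val X) :=
  resetVal Y '' W

/-- A timed automaton `(Q, X, q₀, T, F)`. -/
structure Automaton (Q X : Type) where
  init : Q
  trans : Set (Q × ClockConstraint X × Set X × Q)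
  final : Set Q

/-- `Post_t(W) = {v' : ∃ v ∈ W, ∃ δ ≥ 0, v ⊨ g ∧ v' = [Y]v + δ}` for `t = (q,g,Y,q')`. -/
def Post {Q X : Type} (t : Q × ClockConstraint X × Set X × Q) (W : Set (Val X)) :
    Set (Val X) :=
  {w | ∃ v ∈ W, ∃ δ : NNReal, t.2.1.sat v ∧ w = addVal (resetVal t.2.2.1 v) δ}

/-- The zero valuation. -/
def zeroVal (X : Type) : Val X := fun _ => 0

/-- One step of the semantics: a time elapse or a discrete transition. -/
inductive Step {Q X : Type} (A : Automaton Q X) : (Q × Val X) → (Q × Val X) → Prop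
  | delay (q : Q) (v : Val X) (δ : NNReal) : Step A (q, v) (q, addVal v δ)
  | disc {q : Q} {v : Val X} {g : ClockConstraint X} {R : Set X} {q₁ : Q}
      (ht : (q, g, R, q₁) ∈ A.trans) (hg : g.sat v) :
      Step A (q, v) (q₁, resetVal R v)

/-- A configuration is reachable if some finite run from `(q₀, 0)` ends in it. -/
def Reachable {Q X : Type} (A : Automaton Q X) (c : Q × Val X) : Prop :=
  Relation.ReflTransGen (Step A) (A.init, zeroVal X) c

/-- The initial zone `Z₀ = future {0}`. -/
def initZone (X : Type) : Set (Val X) := future {zeroVal X}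

/-- The set `S` of reachable symbolic states: least set containing `(q₀, Z₀)` and
closed under nonempty `Post`. -/
inductive SymbReach {Q X : Type} (A : Automaton Q X) : Q × Set (Val X) → Prop
  | init : SymbReach A (A.init, initZone X)
  | step {q : Q} {Z : Set (Val X)} {g : ClockConstraint X} {Y : Set X} {q' : Q}
      (h : SymbReach A (q, Z)) (ht : (q, g, Y, q') ∈ A.trans)
      (hne : Post (q, g, Y, q') Z ≠ ∅) :
      SymbReach A (q', Post (q, g, Y, q') Z)

/-- `N` is saturated w.r.t. the extrapolation operator `extra`. -/
def ExtraSaturated {Q X : Type} (A : Automaton Q X)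
    (extra : Q → Set (Val X) → Set (Val X)) (N : Set (Q × Set (Val X))) : Prop :=
  (∃ Z'', (A.init, Z'') ∈ N ∧ extra A.init (initZone X) ⊆ Z'') ∧
  ∀ q Z, (q, Z) ∈ N → ∀ g Y q', (q, g, Y, q') ∈ A.trans →
    Post (q, g, Y, q') Z ≠ ∅ →
    ∃ Z'', (q', Z'') ∈ N ∧ extra q' (Post (q, g, Y, q') Z) ⊆ Z''

/-- A `K`-bounded clock constraint: every `x ⋈ c` has `-K x ≤ c ≤ K x` and
every `x - y ⋈ c` has `-K y ≤ c ≤ K x`. -/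
def KBounded {X : Type} (K : X → ℕ) : ClockConstraint X → Prop
  | .tt => True
  | .single x _ c => -(K x : ℤ) ≤ c ∧ c ≤ (K x : ℤ)
  | .diag x y _ c => -(K y : ℤ) ≤ c ∧ c ≤ (K x : ℤ)
  | .conj g₁ g₂ => KBounded K g₁ ∧ KBounded K g₂

/-- A `K`-bounded zone. -/
def IsKBoundedZone {X : Type} (K : X → ℕ) (Z : Set (Val X)) : Prop :=
  ∃ g : ClockConstraint X, KBounded K g ∧ Z = sem g

/-- An `LU`-bounded clock constraint: every `x ⋈ c` has `-U x ≤ c ≤ L x` and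
every `x - y ⋈ c` has `-U y ≤ c ≤ L x`. -/
def LUBounded {X : Type} (L U : X → ℕ) : ClockConstraint X → Prop
  | .tt => True
  | .single x _ c => -(U x : ℤ) ≤ c ∧ c ≤ (L x : ℤ)
  | .diag x y _ c => -(U y : ℤ) ≤ c ∧ c ≤ (L x : ℤ)
  | .conj g₁ g₂ => LUBounded L U g₁ ∧ LUBounded L U g₂

/-- An `LU`-bounded zone. -/
def IsLUBoundedZone {X : Type} (L U : X → ℕ) (Z : Set (Val X)) : Prop :=
  ∃ g : ClockConstraint X, LUBounded L U g ∧ Z = sem g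

/-- A diagonal-free clock constraint. -/
def DiagFree {X : Type} : ClockConstraint X → Prop
  | .tt => True
  | .single _ _ _ => True
  | .diag _ _ _ _ => False
  | .conj g₁ g₂ => DiagFree g₁ ∧ DiagFree g₂

/-- Every atomic constraint `x ⋈ c` of the guard satisfies `c ≤ K x`. -/
def GuardKBounded {X : Type} (K : X → ℕ) : ClockConstraint X → Prop
  | .tt => True
  | .single x _ c => c ≤ (K x : ℤ)
  | .diag _ _ _ _ => True
  | .conj g₁ g₂ => GuardKBounded K g₁ ∧ GuardKBounded K g₂

/-- `LU`-boundedness of guards: `x < c`, `x ≤ c` need `c ≤ U x`; `x > d`, `x ≥ d`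
need `d ≤ L x`; `x = c` needs both. -/
def GuardLUBounded {X : Type} (L U : X → ℕ) : ClockConstraint X → Prop
  | .tt => True
  | .single x op c =>
      match op with
      | .lt => c ≤ (U x : ℤ)
      | .le => c ≤ (U x : ℤ)
      | .gt => c ≤ (L x : ℤ)
      | .ge => c ≤ (L x : ℤ)
      | .eq => c ≤ (U x : ℤ) ∧ c ≤ (L x : ℤ)
  | .diag _ _ _ _ => True
  | .conj g₁ g₂ => GuardLUBounded L U g₁ ∧ GuardLUBounded L U g₂

/-- A (strong timed) simulation: a preorder relating only configurations with the same
state, compatible with time elapses and discrete transitions. -/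
def IsSimulation {Q X : Type} (A : Automaton Q X)
    (R : (Q × Val X) → (Q × Val X) → Prop) : Prop :=
  (∀ c, R c c) ∧
  (∀ c₁ c₂ c₃, R c₁ c₂ → R c₂ c₃ → R c₁ c₃) ∧
  (∀ c c', R c c' → c.1 = c'.1) ∧
  (∀ q v v', R (q, v) (q, v') →
    (∀ δ : NNReal, R (q, addVal v δ) (q, addVal v' δ)) ∧
    (∀ g Y q₁, (q, g, Y, q₁) ∈ A.trans → g.sat v →
      g.sat v' ∧ R (q₁, resetVal Y v) (q₁, resetVal Y v')))

/-- Labels of run steps: a delay, or a discrete transition. -/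
inductive RunLabel (Q X : Type) where
  | delay : NNReal → RunLabel Q X
  | disc : Q × ClockConstraint X × Set X × Q → RunLabel Q X

/-- Finite runs with an explicit sequence of delays and transitions. -/
inductive LRun {Q X : Type} (A : Automaton Q X) :
    (Q × Val X) → List (RunLabel Q X) → (Q × Val X) → Prop
  | refl (c : Q × Val X) : LRun A c [] c
  | delay {q : Q} {v : Val X} (δ : NNReal) {l : List (RunLabel Q X)} {c' : Q × Val X}
      (h : LRun A (q, addVal v δ) l c') : LRun A (q, v) (RunLabel.delay δ :: l) c'
  | disc {q : Q} {v : Val X} {g : ClockConstraint X} {Y : Set X} {q₁ : Q}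
      {l : List (RunLabel Q X)} {c' : Q × Val X}
      (ht : (q, g, Y, q₁) ∈ A.trans) (hg : g.sat v)
      (h : LRun A (q₁, resetVal Y v) l c') :
      LRun A (q, v) (RunLabel.disc (q, g, Y, q₁) :: l) c'

/-- `N` is saturated w.r.t. the simulation `R`. -/
def SimSaturated {Q X : Type} (A : Automaton Q X)
    (R : (Q × Val X) → (Q × Val X) → Prop) (N : Set (Q × Set (Val X))) : Prop :=
  (∃ Z'', (A.init, Z'') ∈ N ∧ ∀ v ∈ initZone X, ∃ v' ∈ Z'', R (A.init, v) (A.init, v')) ∧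
  ∀ q Z, (q, Z) ∈ N → ∀ g Y q', (q, g, Y, q') ∈ A.trans →
    Post (q, g, Y, q') Z ≠ ∅ →
    ∃ Z'', (q', Z'') ∈ N ∧ ∀ v ∈ Post (q, g, Y, q') Z, ∃ v' ∈ Z'', R (q', v) (q', v')

/-- Atomic constraints, allowing the zero clock `x₀` on the left of a difference. -/
inductive Atom (X : Type) where
  | single : X → CmpOp → ℤ → Atom X
  | negSingle : X → CmpOp → ℤ → Atom X    -- `x₀ - y ⋈ c`
  | diag : X → X → CmpOp → ℤ → Atom X

def Atom.sat {X : Type} (v : Val X) : Atom X → Prop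
  | .single x op c => op.holds (v x : ℝ) (c : ℝ)
  | .negSingle y op c => op.holds (-(v y : ℝ)) (c : ℝ)
  | .diag x y op c => op.holds ((v x : ℝ) - (v y : ℝ)) (c : ℝ)

/-- `pre(φ, Y)` of an atomic constraint w.r.t. a reset set `Y`. -/
noncomputable def preAtom {X : Type} (Y : Set X) : Atom X → Set (Atom X)
  | .single x op c => if x ∈ Y then ∅ else {Atom.single x op c}
  | .negSingle y op c => if y ∈ Y then ∅ else {Atom.negSingle y op c}
  | .diag x y op c =>
      if x ∈ Y then (if y ∈ Y then ∅ else {Atom.negSingle y op c})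
      else (if y ∈ Y then {Atom.single x op c} else {Atom.diag x y op c})

/-- The set of atomic constraints of a guard. -/
def atomsOf {X : Type} : ClockConstraint X → Set (Atom X)
  | .tt => ∅
  | .single x op c => {Atom.single x op c}
  | .diag x y op c => {Atom.diag x y op c}
  | .conj g₁ g₂ => atomsOf g₁ ∪ atomsOf g₂

/-- One step of the fixpoint equations defining the constraint map `G`. -/
noncomputable def cmapStep {Q X : Type} (A : Automaton Q X)
    (G : Q → Set (Atom X)) (q : Q) : Set (Atom X) :=
  {φ | ∃ g Y q', (q, g, Y, q') ∈ A.trans ∧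
        (φ ∈ atomsOf g ∨ ∃ ψ ∈ G q', φ ∈ preAtom Y ψ)}

/-- The `G`-preorder: `(q,v) ≼_G (q,v')` iff for all `δ` and all `φ ∈ G q`,
`v+δ ⊨ φ` implies `v'+δ ⊨ φ` (only configurations with the same state are related). -/
def GPre {Q X : Type} (G : Q → Set (Atom X)) (c c' : Q × Val X) : Prop :=
  c.1 = c'.1 ∧
  ∀ δ : NNReal, ∀ φ ∈ G c.1, Atom.sat (addVal c.2 δ) φ → Atom.sat (addVal c'.2 δ) φ

end Timed
open Timed

namespace TFin
open Timed

/-! ### Bridging NNReal/Real quantifiers -/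

lemma nnforall1 (P : ℝ → Prop) (h : ∀ δ : NNReal, P (δ:ℝ)) : ∀ d : ℝ, 0 ≤ d → P d :=
  fun d hd => by have := h (Real.toNNReal d); rwa [Real.coe_toNNReal d hd] at this

lemma nnforall2 (P : ℝ → Prop) (h : ∀ d : ℝ, 0 ≤ d → P d) : ∀ δ : NNReal, P (δ:ℝ) :=
  fun δ => h δ δ.coe_nonneg

/-! ### Real characterizations -/

lemma H_lt {c a a' : ℝ} : (∀ d : ℝ, 0 ≤ d → (a + d < c → a' + d < c)) ↔ (c ≤ a ∨ a' ≤ a) := by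
  constructor
  · intro h
    by_contra hc
    push_neg at hc
    obtain ⟨h1, h2⟩ := hc
    rcases le_total (c - a') 0 with h3 | h3
    · have := h 0 le_rfl (by linarith)
      linarith
    · have := h (c - a') h3 (by linarith)
      linarith
  · rintro (h | h) d hd hlt <;> linarith

lemma H_le {c a a' : ℝ} : (∀ d : ℝ, 0 ≤ d → (a + d ≤ c → a' + d ≤ c)) ↔ (c < a ∨ a' ≤ a) := by
  constructor
  · intro h
    by_contra hc
    push_neg at hc
    obtain ⟨h1, h2⟩ := hc
    have := h (c - a) (by linarith) (by linarith)
    linarith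
  · rintro (h | h) d hd hle <;> linarith

lemma H_eq {c a a' : ℝ} : (∀ d : ℝ, 0 ≤ d → (a + d = c → a' + d = c)) ↔ (c < a ∨ a' = a) := by
  constructor
  · intro h
    by_contra hc
    push_neg at hc
    obtain ⟨h1, h2⟩ := hc
    have := h (c - a) (by linarith) (by linarith)
    exact h2 (by linarith)
  · rintro (h | h) d hd heq
    · linarith
    · linarith

lemma H_ge {c a a' : ℝ} : (∀ d : ℝ, 0 ≤ d → (c ≤ a + d → c ≤ a' + d)) ↔ (c ≤ a' ∨ a ≤ a') := by
  constructor
  · intro h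
    by_contra hc
    push_neg at hc
    obtain ⟨h1, h2⟩ := hc
    rcases le_total (c - a) 0 with h3 | h3
    · have := h 0 le_rfl (by linarith)
      linarith
    · have := h (c - a) h3 (by linarith)
      linarith
  · rintro (h | h) d hd hge <;> linarith

lemma H_gt {c a a' : ℝ} :
    (∀ d : ℝ, 0 ≤ d → (c < a + d → c < a' + d)) ↔ (c < a' ∨ (a ≤ c ∧ a ≤ a')) := by
  constructor
  · intro h
    by_contra hc
    push_neg at hc
    obtain ⟨h1, h2⟩ := hc
    rcases le_or_gt a c with hac | hac
    · have h3 := h2 hac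
      have := h ((c - a) + (a - a') / 2) (by linarith) (by linarith)
      linarith
    · have := h 0 le_rfl (by linarith)
      linarith
  · rintro (h | ⟨h1, h2⟩) d hd hgt <;> linarith

/-! NNReal versions -/

lemma H_lt' {c a a' : ℝ} : (∀ δ : NNReal, a + (δ:ℝ) < c → a' + (δ:ℝ) < c) ↔ (c ≤ a ∨ a' ≤ a) :=
  ⟨fun h => H_lt.mp (nnforall1 (fun d => a + d < c → a' + d < c) h),
   fun h => nnforall2 (fun d => a + d < c → a' + d < c) (H_lt.mpr h)⟩

lemma H_le' {c a a' : ℝ} : (∀ δ : NNReal, a + (δ:ℝ) ≤ c → a' + (δ:ℝ) ≤ c) ↔ (c < a ∨ a' ≤ a) :=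
  ⟨fun h => H_le.mp (nnforall1 (fun d => a + d ≤ c → a' + d ≤ c) h),
   fun h => nnforall2 (fun d => a + d ≤ c → a' + d ≤ c) (H_le.mpr h)⟩

lemma H_eq' {c a a' : ℝ} : (∀ δ : NNReal, a + (δ:ℝ) = c → a' + (δ:ℝ) = c) ↔ (c < a ∨ a' = a) :=
  ⟨fun h => H_eq.mp (nnforall1 (fun d => a + d = c → a' + d = c) h),
   fun h => nnforall2 (fun d => a + d = c → a' + d = c) (H_eq.mpr h)⟩

lemma H_ge' {c a a' : ℝ} : (∀ δ : NNReal, c ≤ a + (δ:ℝ) → c ≤ a' + (δ:ℝ)) ↔ (c ≤ a' ∨ a ≤ a') :=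
  ⟨fun h => H_ge.mp (nnforall1 (fun d => c ≤ a + d → c ≤ a' + d) h),
   fun h => nnforall2 (fun d => c ≤ a + d → c ≤ a' + d) (H_ge.mpr h)⟩

lemma H_gt' {c a a' : ℝ} :
    (∀ δ : NNReal, c < a + (δ:ℝ) → c < a' + (δ:ℝ)) ↔ (c < a' ∨ (a ≤ c ∧ a ≤ a')) :=
  ⟨fun h => H_gt.mp (nnforall1 (fun d => c < a + d → c < a' + d) h),
   fun h => nnforall2 (fun d => c < a + d → c < a' + d) (H_gt.mpr h)⟩

lemma Hn_lt' {c a a' : ℝ} :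
    (∀ δ : NNReal, -(a + (δ:ℝ)) < c → -(a' + (δ:ℝ)) < c) ↔ (-c < a' ∨ (a ≤ -c ∧ a ≤ a')) := by
  constructor
  · intro h
    refine (H_gt' (c := -c)).mp (fun δ hh => ?_)
    have := h δ (by linarith)
    linarith
  · intro h δ hh
    have := (H_gt' (c := -c)).mpr h δ (by linarith)
    linarith

lemma Hn_le' {c a a' : ℝ} :
    (∀ δ : NNReal, -(a + (δ:ℝ)) ≤ c → -(a' + (δ:ℝ)) ≤ c) ↔ (-c ≤ a' ∨ a ≤ a') := by
  constructor
  · intro h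
    refine (H_ge' (c := -c)).mp (fun δ hh => ?_)
    have := h δ (by linarith)
    linarith
  · intro h δ hh
    have := (H_ge' (c := -c)).mpr h δ (by linarith)
    linarith

lemma Hn_eq' {c a a' : ℝ} :
    (∀ δ : NNReal, -(a + (δ:ℝ)) = c → -(a' + (δ:ℝ)) = c) ↔ (-c < a ∨ a' = a) := by
  constructor
  · intro h
    refine (H_eq' (c := -c)).mp (fun δ hh => ?_)
    have := h δ (by linarith)
    linarith
  · intro h δ hh
    have := (H_eq' (c := -c)).mpr h δ (by linarith)
    linarith

lemma Hn_ge' {c a a' : ℝ} :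
    (∀ δ : NNReal, c ≤ -(a + (δ:ℝ)) → c ≤ -(a' + (δ:ℝ))) ↔ (-c < a ∨ a' ≤ a) := by
  constructor
  · intro h
    refine (H_le' (c := -c)).mp (fun δ hh => ?_)
    have := h δ (by linarith)
    linarith
  · intro h δ hh
    have := (H_le' (c := -c)).mpr h δ (by linarith)
    linarith

lemma Hn_gt' {c a a' : ℝ} :
    (∀ δ : NNReal, c < -(a + (δ:ℝ)) → c < -(a' + (δ:ℝ))) ↔ (-c ≤ a ∨ a' ≤ a) := by
  constructor
  · intro h
    refine (H_lt' (c := -c)).mp (fun δ hh => ?_)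
    have := h δ (by linarith)
    linarith
  · intro h δ hh
    have := (H_lt' (c := -c)).mpr h δ (by linarith)
    linarith

/-! ### The per-atom condition -/

def cond {X : Type} : Atom X → Val X → Val X → Prop
  | .single x .lt c, w, w' => (c:ℝ) ≤ (w x : ℝ) ∨ (w' x : ℝ) ≤ (w x : ℝ)
  | .single x .le c, w, w' => (c:ℝ) < (w x : ℝ) ∨ (w' x : ℝ) ≤ (w x : ℝ)
  | .single x .eq c, w, w' => (c:ℝ) < (w x : ℝ) ∨ (w' x : ℝ) = (w x : ℝ)
  | .single x .ge c, w, w' => (c:ℝ) ≤ (w' x : ℝ) ∨ (w x : ℝ) ≤ (w' x : ℝ)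
  | .single x .gt c, w, w' => (c:ℝ) < (w' x : ℝ) ∨ ((w x : ℝ) ≤ (c:ℝ) ∧ (w x : ℝ) ≤ (w' x : ℝ))
  | .negSingle y .lt c, w, w' =>
      -(c:ℝ) < (w' y : ℝ) ∨ ((w y : ℝ) ≤ -(c:ℝ) ∧ (w y : ℝ) ≤ (w' y : ℝ))
  | .negSingle y .le c, w, w' => -(c:ℝ) ≤ (w' y : ℝ) ∨ (w y : ℝ) ≤ (w' y : ℝ)
  | .negSingle y .eq c, w, w' => -(c:ℝ) < (w y : ℝ) ∨ (w' y : ℝ) = (w y : ℝ)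
  | .negSingle y .ge c, w, w' => -(c:ℝ) < (w y : ℝ) ∨ (w' y : ℝ) ≤ (w y : ℝ)
  | .negSingle y .gt c, w, w' => -(c:ℝ) ≤ (w y : ℝ) ∨ (w' y : ℝ) ≤ (w y : ℝ)
  | .diag x y op c, w, w' =>
      op.holds ((w x : ℝ) - (w y : ℝ)) (c:ℝ) → op.holds ((w' x : ℝ) - (w' y : ℝ)) (c:ℝ)

lemma atom_iff {X : Type} (φ : Atom X) (w w' : Val X) :
    (∀ δ : NNReal, Atom.sat (addVal w δ) φ → Atom.sat (addVal w' δ) φ) ↔ cond φ w w' := by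
  rcases φ with ⟨x, op, c⟩ | ⟨y, op, c⟩ | ⟨x, y, op, c⟩ <;> rcases op <;>
    simp only [Atom.sat, CmpOp.holds, addVal, NNReal.coe_add, cond, ge_iff_le, gt_iff_lt]
  · exact H_lt'
  · exact H_le'
  · exact H_eq'
  · exact H_ge'
  · exact H_gt'
  · exact Hn_lt'
  · exact Hn_le'
  · exact Hn_eq'
  · exact Hn_ge'
  · exact Hn_gt'
  all_goals
    simp only [add_sub_add_right_eq_sub]
    exact ⟨fun h => h 0, fun h _ => h⟩

end TFin
namespace TFin

/-! ### Floor and fract facts -/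

lemma F3 {a : ℝ} {n : ℤ} : a < n ↔ ⌊a⌋ < n := Int.floor_lt.symm

lemma F4 {a : ℝ} {n : ℤ} : a = (n:ℝ) ↔ (⌊a⌋ = n ∧ Int.fract a = 0) := by
  constructor
  · rintro rfl
    simp
  · rintro ⟨h1, h2⟩
    have := Int.floor_add_fract a
    rw [h1, h2] at this
    simpa using this.symm

lemma F1 {a b : ℝ} {n : ℤ} :
    a - b < n ↔ (⌊a⌋ - ⌊b⌋ < n ∨ (⌊a⌋ - ⌊b⌋ = n ∧ Int.fract a < Int.fract b)) := by
  have ha := Int.floor_add_fract a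
  have hb := Int.floor_add_fract b
  have hfa0 := Int.fract_nonneg a
  have hfa1 := Int.fract_lt_one a
  have hfb0 := Int.fract_nonneg b
  have hfb1 := Int.fract_lt_one b
  constructor
  · intro h
    rcases lt_or_ge (⌊a⌋ - ⌊b⌋) n with h1 | h1
    · exact Or.inl h1
    · right
      have h2 : ((⌊a⌋ - ⌊b⌋ : ℤ) : ℝ) < n + 1 := by push_cast; linarith
      have h3 : (⌊a⌋ - ⌊b⌋ : ℤ) < n + 1 := by exact_mod_cast h2
      have h4 : (⌊a⌋ - ⌊b⌋ : ℤ) = n := le_antisymm (by omega) h1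
      refine ⟨h4, ?_⟩
      have h5 : ((⌊a⌋ - ⌊b⌋ : ℤ) : ℝ) = n := by exact_mod_cast h4
      push_cast at h5
      linarith
  · rintro (h | ⟨h1, h2⟩)
    · have h2 : ((⌊a⌋ - ⌊b⌋ : ℤ) : ℝ) ≤ (n:ℝ) - 1 := by
        have : (⌊a⌋ - ⌊b⌋ : ℤ) ≤ n - 1 := by omega
        exact_mod_cast this
      push_cast at h2
      linarith
    · have h5 : ((⌊a⌋ - ⌊b⌋ : ℤ) : ℝ) = n := by exact_mod_cast h1
      push_cast at h5
      linarith

lemma F2 {a b : ℝ} {n : ℤ} :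
    a - b = (n:ℝ) ↔ (⌊a⌋ - ⌊b⌋ = n ∧ Int.fract a = Int.fract b) := by
  have ha := Int.floor_add_fract a
  have hb := Int.floor_add_fract b
  have hfa0 := Int.fract_nonneg a
  have hfa1 := Int.fract_lt_one a
  have hfb0 := Int.fract_nonneg b
  have hfb1 := Int.fract_lt_one b
  constructor
  · intro h
    have h2 : ((⌊a⌋ - ⌊b⌋ : ℤ) : ℝ) < n + 1 := by push_cast; linarith
    have h3 : ((n:ℝ)) - 1 < ((⌊a⌋ - ⌊b⌋ : ℤ) : ℝ) := by push_cast; linarith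
    have h4 : (⌊a⌋ - ⌊b⌋ : ℤ) = n := by
      have h5 : (⌊a⌋ - ⌊b⌋ : ℤ) < n + 1 := by exact_mod_cast h2
      have h6 : n - 1 < (⌊a⌋ - ⌊b⌋ : ℤ) := by exact_mod_cast h3
      omega
    refine ⟨h4, ?_⟩
    have h5 : ((⌊a⌋ - ⌊b⌋ : ℤ) : ℝ) = n := by exact_mod_cast h4
    push_cast at h5
    linarith
  · rintro ⟨h1, h2⟩
    have h5 : ((⌊a⌋ - ⌊b⌋ : ℤ) : ℝ) = n := by exact_mod_cast h1
    push_cast at h5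
    linarith

/-! ### Extension of strictly monotone partial maps -/

lemma ext_mono (A : Finset ℝ) (f : ℝ → ℝ) (h0A : (0:ℝ) ∈ A)
    (hA : ∀ a ∈ A, a ∈ Set.Ico (0:ℝ) 1) (hf : ∀ a ∈ A, f a ∈ Set.Ico (0:ℝ) 1)
    (hf0 : f 0 = 0) (hmono : StrictMonoOn f A) (s : Finset ℝ)
    (hs : ∀ a ∈ s, a ∈ Set.Ico (0:ℝ) 1) :
    ∃ g : ℝ → ℝ, (∀ a ∈ A, g a = f a) ∧ StrictMonoOn g ((A ∪ s : Finset ℝ) : Set ℝ) ∧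
      (∀ a ∈ (A ∪ s : Finset ℝ), g a ∈ Set.Ico (0:ℝ) 1) := by
  classical
  induction s using Finset.induction_on with
  | empty =>
      exact ⟨f, fun a _ => rfl, by simpa using hmono, by simpa using hf⟩
  | @insert t s htns ih =>
      obtain ⟨g, hgf, hgmono, hgIco⟩ := ih (fun a ha => hs a (Finset.mem_insert_of_mem ha))
      by_cases htA : t ∈ A ∪ s
      · have hset : (A ∪ insert t s : Finset ℝ) = (A ∪ s : Finset ℝ) := by
          ext a
          simp only [Finset.mem_union, Finset.mem_insert]
          constructor
          · rintro (h | rfl | h)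
            · exact Or.inl h
            · simpa [Finset.mem_union] using htA
            · exact Or.inr h
          · rintro (h | h)
            · exact Or.inl h
            · exact Or.inr (Or.inr h)
        rw [hset]
        exact ⟨g, hgf, hgmono, hgIco⟩
      · have hmem : ∀ a : ℝ, a ∈ ((A ∪ insert t s : Finset ℝ) : Set ℝ) ↔
            (a ∈ ((A ∪ s : Finset ℝ) : Set ℝ) ∨ a = t) := by
          intro a
          simp only [Finset.coe_union, Finset.coe_insert, Set.mem_union, Finset.mem_coe,
            Set.mem_insert_iff]
          tauto
        have ht : t ∈ Set.Ico (0:ℝ) 1 := hs t (Finset.mem_insert_self t s)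
        have ht0 : 0 < t := by
          rcases eq_or_lt_of_le ht.1 with h | h
          · exact absurd (Finset.mem_union_left s h0A) (h ▸ htA)
          · exact h
        have hLne : (Finset.filter (fun a => a < t) (A ∪ s)).Nonempty :=
          ⟨0, Finset.mem_filter.mpr ⟨Finset.mem_union_left s h0A, ht0⟩⟩
        set m := (Finset.filter (fun a => a < t) (A ∪ s)).max' hLne with hm
        have hmaxL := (Finset.filter (fun a => a < t) (A ∪ s)).max'_mem hLne
        have hmaxLT : m ∈ A ∪ s := (Finset.mem_filter.mp hmaxL).1
        have hmaxLt : m < t := (Finset.mem_filter.mp hmaxL).2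
        have hloIco : g m ∈ Set.Ico (0:ℝ) 1 := hgIco _ hmaxLT
        have hloUB : ∀ a ∈ A ∪ s, a < t → g a ≤ g m := by
          intro a haT halt
          have haL : a ∈ Finset.filter (fun a => a < t) (A ∪ s) :=
            Finset.mem_filter.mpr ⟨haT, halt⟩
          rcases eq_or_lt_of_le (Finset.le_max' _ a haL) with h | h
          · rw [h]
          · exact le_of_lt (hgmono (Finset.mem_coe.mpr haT) (Finset.mem_coe.mpr hmaxLT) h)
        -- pick the upper bound
        have hhi : ∃ hi : ℝ, g m < hi ∧ hi ≤ 1 ∧ ∀ a ∈ A ∪ s, t < a → hi ≤ g a := by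
          by_cases hUne : (Finset.filter (fun a => t < a) (A ∪ s)).Nonempty
          · set m' := (Finset.filter (fun a => t < a) (A ∪ s)).min' hUne with hm'
            have hminU := (Finset.filter (fun a => t < a) (A ∪ s)).min'_mem hUne
            have hminUT : m' ∈ A ∪ s := (Finset.mem_filter.mp hminU).1
            have hminUt : t < m' := (Finset.mem_filter.mp hminU).2
            refine ⟨g m', hgmono (Finset.mem_coe.mpr hmaxLT) (Finset.mem_coe.mpr hminUT)
              (lt_trans hmaxLt hminUt), le_of_lt (hgIco _ hminUT).2, ?_⟩
            intro a haT hta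
            have haU : a ∈ Finset.filter (fun a => t < a) (A ∪ s) :=
              Finset.mem_filter.mpr ⟨haT, hta⟩
            rcases eq_or_lt_of_le (Finset.min'_le _ a haU) with h | h
            · rw [← h]
            · exact le_of_lt (hgmono (Finset.mem_coe.mpr hminUT) (Finset.mem_coe.mpr haT) h)
          · refine ⟨1, hloIco.2, le_rfl, ?_⟩
            intro a haT hta
            exact absurd ⟨a, Finset.mem_filter.mpr ⟨haT, hta⟩⟩ hUne
        obtain ⟨hi, hlohi, hhi1, hhiLB⟩ := hhi
        refine ⟨Function.update g t ((g m + hi) / 2), ?_, ?_, ?_⟩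
        · intro a haA
          have hat : a ≠ t := by
            rintro rfl
            exact htA (Finset.mem_union_left s haA)
          rw [Function.update_of_ne hat]
          exact hgf a haA
        · intro a haM b hbM hab
          rcases (hmem a).mp haM with haT | hat'
          · have hat : a ≠ t := by
              rintro rfl
              exact htA (Finset.mem_coe.mp haT)
            rcases (hmem b).mp hbM with hbT | hbt'
            · have hbt : b ≠ t := by
                rintro rfl
                exact htA (Finset.mem_coe.mp hbT)
              rw [Function.update_of_ne hat, Function.update_of_ne hbt]
              exact hgmono haT hbT hab
            · rw [hbt'] at hab
              rw [hbt', Function.update_of_ne hat, Function.update_self]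
              have h1 : g a ≤ g m := hloUB a (Finset.mem_coe.mp haT) hab
              linarith
          · rw [hat'] at hab
            rcases (hmem b).mp hbM with hbT | hbt'
            · have hbt : b ≠ t := by
                rintro rfl
                exact htA (Finset.mem_coe.mp hbT)
              rw [hat', Function.update_self, Function.update_of_ne hbt]
              have h1 : hi ≤ g b := hhiLB b (Finset.mem_coe.mp hbT) hab
              linarith
            · rw [hbt'] at hab
              exact absurd hab (lt_irrefl t)
        · intro a haM
          by_cases hat : a = t
          · subst hat
            rw [Function.update_self]
            constructor
            · have := hloIco.1
              linarith
            · rcases eq_or_lt_of_le hhi1 with h | h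
              · rw [h] at hlohi ⊢
                have := hloIco.2
                linarith
              · linarith
          · rw [Function.update_of_ne hat]
            apply hgIco
            rcases (hmem a).mp (Finset.mem_coe.mpr haM) with haT | hat'
            · exact Finset.mem_coe.mp haT
            · exact absurd hat' hat

end TFin
namespace TFin
open Timed

/-! ### Profile equivalence -/

def Prof {X : Type} (M : ℕ) (u v : Val X) : Prop :=
  ∀ c : ℤ, c.natAbs ≤ M →
    (∀ x, (((v x:ℝ) < (c:ℝ)) ↔ ((u x:ℝ) < (c:ℝ))) ∧
      (((v x:ℝ) = (c:ℝ)) ↔ ((u x:ℝ) = (c:ℝ)))) ∧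
    (∀ x y, (((v x:ℝ) - (v y:ℝ) < (c:ℝ)) ↔ ((u x:ℝ) - (u y:ℝ) < (c:ℝ))) ∧
      (((v x:ℝ) - (v y:ℝ) = (c:ℝ)) ↔ ((u x:ℝ) - (u y:ℝ) = (c:ℝ)))) 

lemma prof_floor {X : Type} {M : ℕ} {u v : Val X} (h : Prof M u v) (x : X)
    (hx : (v x:ℝ) ≤ M) :
    (u x:ℝ) ≤ M ∧ ⌊(u x:ℝ)⌋ = ⌊(v x:ℝ)⌋ ∧
      (Int.fract (v x:ℝ) = 0 ↔ Int.fract (u x:ℝ) = 0) := by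
  set n : ℤ := ⌊(v x:ℝ)⌋ with hn
  have hvnn : (0:ℝ) ≤ (v x:ℝ) := (v x).coe_nonneg
  have hn0 : 0 ≤ n := Int.floor_nonneg.mpr hvnn
  have hnM : n ≤ (M:ℤ) := by
    have h1 : ⌊(v x:ℝ)⌋ ≤ ⌊((M:ℤ):ℝ)⌋ := Int.floor_le_floor (by exact_mod_cast hx)
    simpa using h1
  have hflo : ((n:ℤ):ℝ) ≤ (v x:ℝ) := Int.floor_le _
  rcases eq_or_lt_of_le hnM with hnM' | hnM'
  · -- v x = M
    have hnR : ((n:ℤ):ℝ) = ((M:ℤ):ℝ) := by exact_mod_cast hnM'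
    have hvM : (v x:ℝ) = ((M:ℤ):ℝ) := by
      have hx' : (v x:ℝ) ≤ ((M:ℤ):ℝ) := by push_cast; exact hx
      linarith
    have hMabs : ((M:ℤ)).natAbs ≤ M := by omega
    have huM : (u x:ℝ) = ((M:ℤ):ℝ) := ((h (M:ℤ) hMabs).1 x).2.mp hvM
    refine ⟨by rw [huM]; push_cast; exact le_refl _, ?_, ?_⟩
    · rw [huM, Int.floor_intCast]
      exact hnM'.symm
    · rw [huM, hvM]
  · -- n < M
    have hn1 : (n+1 : ℤ).natAbs ≤ M := by omega
    have hnabs : n.natAbs ≤ M := by omega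
    have h1 : ¬ ((v x:ℝ) < ((n:ℤ):ℝ)) := not_lt.mpr hflo
    have h2 : ¬ ((u x:ℝ) < ((n:ℤ):ℝ)) := fun hh => h1 (((h n hnabs).1 x).1.mpr hh)
    have h3 : (v x:ℝ) < (((n+1:ℤ)):ℝ) := by
      push_cast
      exact_mod_cast Int.lt_floor_add_one (v x:ℝ)
    have h4 : (u x:ℝ) < (((n+1:ℤ)):ℝ) := ((h (n+1) hn1).1 x).1.mp h3
    have hufl : ⌊(u x:ℝ)⌋ = n := by
      rw [Int.floor_eq_iff]
      · constructor
        · exact not_lt.mp h2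
        · push_cast at h4 ⊢
          exact h4
    have huM : (u x:ℝ) ≤ M := by
      have : ((n+1:ℤ):ℝ) ≤ ((M:ℤ):ℝ) := by exact_mod_cast hnM'
      push_cast at this h4
      push_cast
      linarith
    refine ⟨huM, hufl, ?_⟩
    have hfv : Int.fract (v x:ℝ) = (v x:ℝ) - n := by rw [Int.fract, ← hn]
    have hfu : Int.fract (u x:ℝ) = (u x:ℝ) - n := by rw [Int.fract, hufl]
    rw [hfv, hfu]
    constructor
    · intro hh
      have : (v x:ℝ) = ((n:ℤ):ℝ) := by linarith
      have := ((h n hnabs).1 x).2.mp this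
      linarith
    · intro hh
      have : (u x:ℝ) = ((n:ℤ):ℝ) := by linarith
      have := ((h n hnabs).1 x).2.mpr this
      linarith

lemma prof_fract {X : Type} {M : ℕ} {u v : Val X} (h : Prof M u v) (x y : X)
    (hx : (v x:ℝ) ≤ M) (hy : (v y:ℝ) ≤ M) :
    (Int.fract (v x:ℝ) < Int.fract (v y:ℝ) ↔ Int.fract (u x:ℝ) < Int.fract (u y:ℝ)) ∧
    (Int.fract (v x:ℝ) = Int.fract (v y:ℝ) ↔ Int.fract (u x:ℝ) = Int.fract (u y:ℝ)) := by
  obtain ⟨huxM, hufx, _⟩ := prof_floor h x hx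
  obtain ⟨huyM, hufy, _⟩ := prof_floor h y hy
  set d : ℤ := ⌊(v x:ℝ)⌋ - ⌊(v y:ℝ)⌋ with hd
  have hx0 : 0 ≤ ⌊(v x:ℝ)⌋ := Int.floor_nonneg.mpr (v x).coe_nonneg
  have hy0 : 0 ≤ ⌊(v y:ℝ)⌋ := Int.floor_nonneg.mpr (v y).coe_nonneg
  have hxM : ⌊(v x:ℝ)⌋ ≤ (M:ℤ) := by
    have := Int.floor_le_floor (R := ℝ) (by exact_mod_cast hx : (v x:ℝ) ≤ ((M:ℤ):ℝ))
    simpa using this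
  have hyM : ⌊(v y:ℝ)⌋ ≤ (M:ℤ) := by
    have := Int.floor_le_floor (R := ℝ) (by exact_mod_cast hy : (v y:ℝ) ≤ ((M:ℤ):ℝ))
    simpa using this
  have hdabs : d.natAbs ≤ M := by omega
  have hiff := (h d hdabs).2 x y
  have hvd : ⌊(v x:ℝ)⌋ - ⌊(v y:ℝ)⌋ = d := rfl
  have hud : ⌊(u x:ℝ)⌋ - ⌊(u y:ℝ)⌋ = d := by rw [hufx, hufy]
  constructor
  · constructor
    · intro hh
      have h1 : (v x:ℝ) - (v y:ℝ) < (d:ℝ) := F1.mpr (Or.inr ⟨hvd, hh⟩)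
      have h2 := hiff.1.mp h1
      rcases F1.mp h2 with h3 | h3
      · omega
      · exact h3.2
    · intro hh
      have h1 : (u x:ℝ) - (u y:ℝ) < (d:ℝ) := F1.mpr (Or.inr ⟨hud, hh⟩)
      have h2 := hiff.1.mpr h1
      rcases F1.mp h2 with h3 | h3
      · omega
      · exact h3.2
  · constructor
    · intro hh
      have h1 : (v x:ℝ) - (v y:ℝ) = (d:ℝ) := F2.mpr ⟨hvd, hh⟩
      exact (F2.mp (hiff.2.mp h1)).2
    · intro hh
      have h1 : (u x:ℝ) - (u y:ℝ) = (d:ℝ) := F2.mpr ⟨hud, hh⟩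
      exact (F2.mp (hiff.2.mpr h1)).2

/-! ### Transport along a fractional re-scaling -/

noncomputable def Htr (g : ℝ → ℝ) (a : ℝ) : ℝ := (⌊a⌋ : ℝ) + g (Int.fract a)

section Htr

variable {g : ℝ → ℝ} {D : Finset ℝ}
  (hg : StrictMonoOn g (D : Set ℝ))
  (hIco : ∀ a ∈ D, g a ∈ Set.Ico (0:ℝ) 1)
  (h0D : (0:ℝ) ∈ D) (hg0 : g 0 = 0)

include hIco in
lemma Htr_floor {a : ℝ} (ha : Int.fract a ∈ D) :
    ⌊Htr g a⌋ = ⌊a⌋ ∧ Int.fract (Htr g a) = g (Int.fract a) := by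
  have hr := hIco _ ha
  have h1 : ⌊Htr g a⌋ = ⌊a⌋ := by
    rw [Htr, add_comm, Int.floor_add_intCast]
    rw [Int.floor_eq_zero_iff.mpr hr]
    ring
  refine ⟨h1, ?_⟩
  rw [Int.fract, h1, Htr]
  ring

include hg hIco in
lemma Htr_lt (a b : ℝ) (ha : Int.fract a ∈ D) (hb : Int.fract b ∈ D) (hab : a < b) :
    Htr g a < Htr g b := by
  have hfl : ⌊a⌋ ≤ ⌊b⌋ := Int.floor_le_floor (le_of_lt hab)
  rcases eq_or_lt_of_le hfl with h | h
  · have hfr : Int.fract a < Int.fract b := by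
      rw [Int.fract, Int.fract, h]
      linarith
    have := hg ha hb hfr
    rw [Htr, Htr, h]
    linarith
  · have h1 := (hIco _ ha).2
    have h2 := (hIco _ hb).1
    rw [Htr, Htr]
    have : (⌊a⌋:ℝ) + 1 ≤ (⌊b⌋:ℝ) := by exact_mod_cast h
    linarith

include hg hIco in
lemma Htr_le (a b : ℝ) (ha : Int.fract a ∈ D) (hb : Int.fract b ∈ D) (hab : a ≤ b) :
    Htr g a ≤ Htr g b := by
  rcases eq_or_lt_of_le hab with h | h
  · rw [h]
  · exact le_of_lt (Htr_lt hg hIco a b ha hb h)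

include hg hIco h0D hg0 in
lemma g_zero_iff (a : ℝ) (ha : a ∈ D) (ha0 : 0 ≤ a) : (g a = 0 ↔ a = 0) := by
  constructor
  · intro hh
    by_contra hne
    have : (0:ℝ) < a := lt_of_le_of_ne ha0 (Ne.symm hne)
    have := hg h0D ha this
    rw [hg0, hh] at this
    exact lt_irrefl 0 this
  · rintro rfl
    exact hg0

include hg hIco h0D hg0 in
lemma Htr_int_iff (a : ℝ) (ha : Int.fract a ∈ D) (n : ℤ) :
    ((Htr g a < n ↔ a < n) ∧ (Htr g a = n ↔ a = n)) := by
  obtain ⟨h1, h2⟩ := Htr_floor (g := g) hIco ha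
  constructor
  · rw [← Int.floor_lt, ← Int.floor_lt, h1]
  · rw [F4, F4, h1, h2]
    have := g_zero_iff hg hIco h0D hg0 (Int.fract a) ha (Int.fract_nonneg a)
    rw [this]

include hg hIco in
lemma Htr_fract_iff (a b : ℝ) (ha : Int.fract a ∈ D) (hb : Int.fract b ∈ D) :
    ((g (Int.fract a) < g (Int.fract b) ↔ Int.fract a < Int.fract b) ∧
     (g (Int.fract a) = g (Int.fract b) ↔ Int.fract a = Int.fract b)) := by
  constructor
  · constructor
    · intro hh
      rcases lt_trichotomy (Int.fract a) (Int.fract b) with h | h | h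
      · exact h
      · rw [h] at hh; exact absurd hh (lt_irrefl _)
      · exact absurd (hg hb ha h) (not_lt.mpr (le_of_lt hh))
    · exact fun h => hg ha hb h
  · constructor
    · intro hh
      rcases lt_trichotomy (Int.fract a) (Int.fract b) with h | h | h
      · exact absurd (hg ha hb h) (by rw [hh]; exact lt_irrefl _)
      · exact h
      · exact absurd (hg hb ha h) (by rw [hh]; exact lt_irrefl _)
    · intro hh
      rw [hh]

include hg hIco h0D hg0 in
lemma Htr_diff_iff (a b : ℝ) (ha : Int.fract a ∈ D) (hb : Int.fract b ∈ D) (n : ℤ) :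
    ((Htr g a - Htr g b < n ↔ a - b < n) ∧ (Htr g a - Htr g b = n ↔ a - b = n)) := by
  obtain ⟨ha1, ha2⟩ := Htr_floor (g := g) hIco ha
  obtain ⟨hb1, hb2⟩ := Htr_floor (g := g) hIco hb
  obtain ⟨hfr1, hfr2⟩ := Htr_fract_iff hg hIco a b ha hb
  constructor
  · rw [F1, F1, ha1, hb1, ha2, hb2, hfr1]
  · rw [F2, F2, ha1, hb1, ha2, hb2, hfr2]

end Htr

end TFin
namespace TFin
open Timed

lemma holds_transfer {a b c : ℝ} (h1 : a < c ↔ b < c) (h2 : a = c ↔ b = c)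
    (op : CmpOp) (h : op.holds a c) : op.holds b c := by
  cases op <;> simp only [CmpOp.holds, ge_iff_le, gt_iff_lt] at h ⊢
  · exact h1.mp h
  · rcases eq_or_lt_of_le h with h' | h'
    · exact le_of_eq (h2.mp h')
    · exact le_of_lt (h1.mp h')
  · exact h2.mp h
  · by_contra hb
    push_neg at hb
    exact absurd h (not_le.mpr (h1.mpr hb))
  · by_contra hb
    push_neg at hb
    rcases eq_or_lt_of_le hb with h' | h'
    · rw [h2.mpr h'] at h
      exact lt_irrefl c h
    · exact absurd h (not_lt.mpr (le_of_lt (h1.mpr h')))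

lemma sat_transfer {X : Type} {v' u' : Val X}
    (hs : ∀ x (n : ℤ), (((v' x:ℝ) < (n:ℝ)) ↔ ((u' x:ℝ) < (n:ℝ))) ∧
      (((v' x:ℝ) = (n:ℝ)) ↔ ((u' x:ℝ) = (n:ℝ))))
    (hd : ∀ x y (n : ℤ), (((v' x:ℝ) - (v' y:ℝ) < (n:ℝ)) ↔ ((u' x:ℝ) - (u' y:ℝ) < (n:ℝ))) ∧
      (((v' x:ℝ) - (v' y:ℝ) = (n:ℝ)) ↔ ((u' x:ℝ) - (u' y:ℝ) = (n:ℝ)))) :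
    ∀ g0 : ClockConstraint X, g0.sat v' → g0.sat u' := by
  intro g0
  induction g0 with
  | tt => intro; trivial
  | single x op c =>
      intro h
      exact holds_transfer (hs x c).1 (hs x c).2 op h
  | diag x y op c =>
      intro h
      exact holds_transfer (hd x y c).1 (hd x y c).2 op h
  | conj g1 g2 ih1 ih2 =>
      intro h
      exact ⟨ih1 h.1, ih2 h.2⟩

def atomConst {X : Type} : Atom X → ℤ
  | .single _ _ c => c
  | .negSingle _ _ c => c
  | .diag _ _ _ c => c

end TFin
namespace TFin
open Timed

noncomputable def fmap {X : Type} (M : ℕ) (u v : Val X) : ℝ → ℝ := fun a =>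
  if h : ∃ x, ((v x:ℝ) ≤ (M:ℝ) ∧ Int.fract ((v x:ℝ)) = a)
  then Int.fract ((u (Classical.choose h) : ℝ)) else 0

lemma fmap_eq {X : Type} {M : ℕ} {u v : Val X} (hprof : Prof M u v) (x : X)
    (hx : (v x:ℝ) ≤ (M:ℝ)) :
    fmap M u v (Int.fract ((v x:ℝ))) = Int.fract ((u x:ℝ)) := by
  have hex : ∃ x', ((v x':ℝ) ≤ (M:ℝ) ∧ Int.fract ((v x':ℝ)) = Int.fract ((v x:ℝ))) :=
    ⟨x, hx, rfl⟩
  rw [fmap, dif_pos hex]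
  obtain ⟨hx0M, hfr⟩ := hex.choose_spec
  exact (prof_fract hprof _ x hx0M hx).2.mp hfr

lemma fmap_Ico {X : Type} (M : ℕ) (u v : Val X) (a : ℝ) :
    fmap M u v a ∈ Set.Ico (0:ℝ) 1 := by
  rw [fmap]
  split
  · exact ⟨Int.fract_nonneg _, Int.fract_lt_one _⟩
  · exact ⟨le_rfl, one_pos⟩

lemma fmap_zero {X : Type} {M : ℕ} {u v : Val X} (hprof : Prof M u v) :
    fmap M u v 0 = 0 := by
  rw [fmap]
  split
  · next h =>
      obtain ⟨hx, hfr⟩ := h.choose_spec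
      exact (prof_floor hprof _ hx).2.2.mp hfr
  · rfl

noncomputable def BFr {X : Type} [Fintype X] (M : ℕ) (v : Val X) : Finset ℝ :=
  insert 0 (Finset.image
    (fun x => if (v x:ℝ) ≤ (M:ℝ) then Int.fract ((v x:ℝ)) else 0) Finset.univ)

lemma BFr_zero {X : Type} [Fintype X] (M : ℕ) (v : Val X) : (0:ℝ) ∈ BFr M v :=
  Finset.mem_insert_self _ _

lemma BFr_mem {X : Type} [Fintype X] {M : ℕ} {v : Val X} {x : X}
    (hx : (v x:ℝ) ≤ (M:ℝ)) : Int.fract ((v x:ℝ)) ∈ BFr M v := by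
  apply Finset.mem_insert_of_mem
  refine Finset.mem_image.mpr ⟨x, Finset.mem_univ x, ?_⟩
  rw [if_pos hx]

lemma BFr_sub {X : Type} [Fintype X] (M : ℕ) (v : Val X) :
    ∀ a ∈ BFr M v, a ∈ Set.Ico (0:ℝ) 1 := by
  intro a ha
  rcases Finset.mem_insert.mp ha with rfl | ha
  · exact ⟨le_rfl, one_pos⟩
  · obtain ⟨x, _, hx⟩ := Finset.mem_image.mp ha
    subst hx
    split
    · exact ⟨Int.fract_nonneg _, Int.fract_lt_one _⟩
    · exact ⟨le_rfl, one_pos⟩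

lemma BFr_cases {X : Type} [Fintype X] {M : ℕ} {v : Val X} :
    ∀ a ∈ BFr M v, a = 0 ∨ ∃ x, (v x:ℝ) ≤ (M:ℝ) ∧ Int.fract ((v x:ℝ)) = a := by
  intro a ha
  rcases Finset.mem_insert.mp ha with rfl | ha
  · exact Or.inl rfl
  · obtain ⟨x, _, hx⟩ := Finset.mem_image.mp ha
    by_cases h : (v x:ℝ) ≤ (M:ℝ)
    · rw [if_pos h] at hx
      exact Or.inr ⟨x, h, hx⟩
    · rw [if_neg h] at hx
      exact Or.inl hx.symm

lemma fmap_smono {X : Type} [Fintype X] {M : ℕ} {u v : Val X} (hprof : Prof M u v) :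
    StrictMonoOn (fmap M u v) (BFr M v : Set ℝ) := by
  intro a ha b hb hab
  rcases BFr_cases b (Finset.mem_coe.mp hb) with rfl | ⟨xb, hxb, hfrb⟩
  · exact absurd (lt_of_le_of_lt (BFr_sub M v a (Finset.mem_coe.mp ha)).1 hab)
      (lt_irrefl 0)
  · have hfb : fmap M u v b = Int.fract ((u xb:ℝ)) := by
      rw [← hfrb]
      exact fmap_eq hprof xb hxb
    rcases BFr_cases a (Finset.mem_coe.mp ha) with rfl | ⟨xa, hxa, hfra⟩
    · rw [fmap_zero hprof, hfb]
      have h1 : Int.fract ((v xb:ℝ)) ≠ 0 := by rw [hfrb]; exact ne_of_gt hab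
      have h2 : Int.fract ((u xb:ℝ)) ≠ 0 := fun hh =>
        h1 ((prof_floor hprof xb hxb).2.2.mpr hh)
      exact lt_of_le_of_ne (Int.fract_nonneg _) (Ne.symm h2)
    · have hfa : fmap M u v a = Int.fract ((u xa:ℝ)) := by
        rw [← hfra]
        exact fmap_eq hprof xa hxa
      rw [hfa, hfb]
      apply (prof_fract hprof xa xb hxa hxb).1.mp
      rw [hfra, hfrb]
      exact hab

/-! ### The key construction lemma -/

lemma key {X : Type} [Fintype X] {M : ℕ} (Γ : Set (Atom X))
    (hΓ : ∀ φ ∈ Γ, (atomConst φ).natAbs ≤ M)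
    (g0 : ClockConstraint X) (u v v' : Val X) (hv' : g0.sat v')
    (hsim : ∀ φ ∈ Γ, cond φ v v') (hprof : Prof M u v) :
    ∃ u' : Val X, g0.sat u' ∧ ∀ φ ∈ Γ, cond φ u u' := by
  classical
  obtain ⟨g, hgf, hgmono, hgIco'⟩ := ext_mono (BFr M v) (fmap M u v) (BFr_zero M v)
    (BFr_sub M v) (fun a _ => fmap_Ico M u v a) (fmap_zero hprof) (fmap_smono hprof)
    (Finset.image (fun x => Int.fract ((v' x:ℝ))) Finset.univ)
    (fun a ha => by
      obtain ⟨x, _, hx⟩ := Finset.mem_image.mp ha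
      subst hx
      exact ⟨Int.fract_nonneg _, Int.fract_lt_one _⟩)
  set D : Finset ℝ := BFr M v ∪ Finset.image (fun x => Int.fract ((v' x:ℝ))) Finset.univ
    with hD
  have hgIco : ∀ a ∈ D, g a ∈ Set.Ico (0:ℝ) 1 := hgIco'
  have h0D : (0:ℝ) ∈ D := Finset.mem_union_left _ (BFr_zero M v)
  have hg0 : g 0 = 0 := by rw [hgf 0 (BFr_zero M v), fmap_zero hprof]
  have hfr' : ∀ x, Int.fract ((v' x:ℝ)) ∈ D := fun x =>
    Finset.mem_union_right _ (Finset.mem_image.mpr ⟨x, Finset.mem_univ x, rfl⟩)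
  have hfrB : ∀ x, (v x:ℝ) ≤ (M:ℝ) → Int.fract ((v x:ℝ)) ∈ D := fun x hx =>
    Finset.mem_union_left _ (BFr_mem hx)
  -- the new valuation
  have hHtrnn : ∀ x, 0 ≤ Htr g ((v' x:ℝ)) := by
    intro x
    have h1 : (0:ℝ) ≤ (⌊(v' x:ℝ)⌋ : ℝ) := by
      exact_mod_cast Int.floor_nonneg.mpr (v' x).coe_nonneg
    have h2 := (hgIco _ (hfr' x)).1
    rw [Htr]
    linarith
  set u' : Val X := fun x => Real.toNNReal (Htr g ((v' x:ℝ))) with hu'def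
  have hu' : ∀ x, (u' x : ℝ) = Htr g ((v' x:ℝ)) := fun x =>
    Real.coe_toNNReal _ (hHtrnn x)
  -- integer- and difference-atom preservation between v' and u'
  have hP1 : ∀ (x : X) (n : ℤ), (((v' x:ℝ) < (n:ℝ)) ↔ ((u' x:ℝ) < (n:ℝ))) ∧
      (((v' x:ℝ) = (n:ℝ)) ↔ ((u' x:ℝ) = (n:ℝ))) := by
    intro x n
    have h := Htr_int_iff hgmono hgIco h0D hg0 ((v' x:ℝ)) (hfr' x) n
    rw [hu' x]
    exact ⟨h.1.symm, h.2.symm⟩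
  have hP2 : ∀ (x y : X) (n : ℤ),
      (((v' x:ℝ) - (v' y:ℝ) < (n:ℝ)) ↔ ((u' x:ℝ) - (u' y:ℝ) < (n:ℝ))) ∧
      (((v' x:ℝ) - (v' y:ℝ) = (n:ℝ)) ↔ ((u' x:ℝ) - (u' y:ℝ) = (n:ℝ))) := by
    intro x y n
    have h := Htr_diff_iff hgmono hgIco h0D hg0 ((v' x:ℝ)) ((v' y:ℝ)) (hfr' x) (hfr' y) n
    rw [hu' x, hu' y]
    exact ⟨h.1.symm, h.2.symm⟩
  have hsat : g0.sat u' := sat_transfer hP1 hP2 g0 hv'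
  -- u agrees with the transport on bounded clocks
  have huB : ∀ x, (v x:ℝ) ≤ (M:ℝ) → (u x:ℝ) = Htr g ((v x:ℝ)) := by
    intro x hx
    have hfl := (prof_floor hprof x hx).2.1
    have h1 : g (Int.fract ((v x:ℝ))) = Int.fract ((u x:ℝ)) := by
      rw [hgf _ (BFr_mem hx), fmap_eq hprof x hx]
    rw [Htr, h1, hfl.symm]
    have := Int.floor_add_fract ((u x:ℝ))
    linarith
  -- bound on constants
  have cM : ∀ c : ℤ, c.natAbs ≤ M → (c:ℝ) ≤ (M:ℝ) := by
    intro c hc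
    have : (c:ℤ) ≤ (M:ℤ) := by omega
    exact_mod_cast this
  -- transfer helpers between v and u (for small constants)
  have tr1 : ∀ (x : X) (c : ℤ), c.natAbs ≤ M →
      ((((v x:ℝ) < (c:ℝ)) ↔ ((u x:ℝ) < (c:ℝ))) ∧
       (((v x:ℝ) = (c:ℝ)) ↔ ((u x:ℝ) = (c:ℝ)))) := fun x c hc => (hprof c hc).1 x
  have trlt : ∀ (x : X) (c : ℤ), c.natAbs ≤ M → (c:ℝ) < (v x:ℝ) → (c:ℝ) < (u x:ℝ) := by
    intro x c hc h
    by_contra h2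
    push_neg at h2
    rcases eq_or_lt_of_le h2 with h3 | h3
    · have := (tr1 x c hc).2.mpr h3
      rw [this] at h
      exact lt_irrefl _ h
    · exact absurd ((tr1 x c hc).1.mpr h3) (not_lt.mpr (le_of_lt h))
  have trge : ∀ (x : X) (c : ℤ), c.natAbs ≤ M → (c:ℝ) ≤ (v x:ℝ) → (c:ℝ) ≤ (u x:ℝ) := by
    intro x c hc h
    by_contra h2
    push_neg at h2
    exact absurd ((tr1 x c hc).1.mpr h2) (not_lt.mpr h)
  have trle : ∀ (x : X) (c : ℤ), c.natAbs ≤ M → (v x:ℝ) ≤ (c:ℝ) → (u x:ℝ) ≤ (c:ℝ) := by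
    intro x c hc h
    rcases eq_or_lt_of_le h with h3 | h3
    · exact le_of_eq ((tr1 x c hc).2.mp h3)
    · exact le_of_lt ((tr1 x c hc).1.mp h3)
  -- transfer helpers between v' and u' (any integer constant)
  have trlt' : ∀ (x : X) (c : ℤ), (c:ℝ) < (v' x:ℝ) → (c:ℝ) < (u' x:ℝ) := by
    intro x c h
    by_contra h2
    push_neg at h2
    rcases eq_or_lt_of_le h2 with h3 | h3
    · have := (hP1 x c).2.mpr h3
      rw [this] at h
      exact lt_irrefl _ h
    · exact absurd ((hP1 x c).1.mpr h3) (not_lt.mpr (le_of_lt h))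
  have trge' : ∀ (x : X) (c : ℤ), (c:ℝ) ≤ (v' x:ℝ) → (c:ℝ) ≤ (u' x:ℝ) := by
    intro x c h
    by_contra h2
    push_neg at h2
    exact absurd ((hP1 x c).1.mpr h2) (not_lt.mpr h)
  -- monotone transport comparisons
  have Hle : ∀ (a b : ℝ), Int.fract a ∈ D → Int.fract b ∈ D → a ≤ b →
      Htr g a ≤ Htr g b := fun a b ha hb hab => Htr_le hgmono hgIco a b ha hb hab
  refine ⟨u', hsat, ?_⟩
  intro φ hφ
  have hc := hΓ φ hφ
  have hcnd := hsim φ hφ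
  cases φ with
  | single x op c =>
      simp only [atomConst] at hc
      cases op with
      | lt =>
          simp only [cond] at hcnd ⊢
          by_cases h1 : (c:ℝ) ≤ (v x:ℝ)
          · exact Or.inl (trge x c hc h1)
          · push_neg at h1
            have h2 : (v' x:ℝ) ≤ (v x:ℝ) := hcnd.resolve_left (not_le.mpr h1)
            have hxM : (v x:ℝ) ≤ (M:ℝ) := le_trans (le_of_lt h1) (cM c hc)
            right
            rw [hu' x, huB x hxM]
            exact Hle _ _ (hfr' x) (hfrB x hxM) h2
      | le =>
          simp only [cond] at hcnd ⊢
          by_cases h1 : (c:ℝ) < (v x:ℝ)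
          · exact Or.inl (trlt x c hc h1)
          · push_neg at h1
            have h2 : (v' x:ℝ) ≤ (v x:ℝ) := hcnd.resolve_left (not_lt.mpr h1)
            have hxM : (v x:ℝ) ≤ (M:ℝ) := le_trans h1 (cM c hc)
            right
            rw [hu' x, huB x hxM]
            exact Hle _ _ (hfr' x) (hfrB x hxM) h2
      | eq =>
          simp only [cond] at hcnd ⊢
          by_cases h1 : (c:ℝ) < (v x:ℝ)
          · exact Or.inl (trlt x c hc h1)
          · push_neg at h1
            have h2 : (v' x:ℝ) = (v x:ℝ) := hcnd.resolve_left (not_lt.mpr h1)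
            have hxM : (v x:ℝ) ≤ (M:ℝ) := le_trans h1 (cM c hc)
            right
            rw [hu' x, huB x hxM, h2]
      | ge =>
          simp only [cond] at hcnd ⊢
          by_cases h1 : (c:ℝ) ≤ (v' x:ℝ)
          · exact Or.inl (trge' x c h1)
          · push_neg at h1
            have h2 : (v x:ℝ) ≤ (v' x:ℝ) := hcnd.resolve_left (not_le.mpr h1)
            have hxM : (v x:ℝ) ≤ (M:ℝ) := le_trans (le_trans h2 (le_of_lt h1)) (cM c hc)
            right
            rw [hu' x, huB x hxM]
            exact Hle _ _ (hfrB x hxM) (hfr' x) h2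
      | gt =>
          simp only [cond] at hcnd ⊢
          by_cases h1 : (c:ℝ) < (v' x:ℝ)
          · exact Or.inl (trlt' x c h1)
          · push_neg at h1
            obtain ⟨h2, h3⟩ := hcnd.resolve_left (not_lt.mpr h1)
            have hxM : (v x:ℝ) ≤ (M:ℝ) := le_trans h2 (cM c hc)
            right
            refine ⟨trle x c hc h2, ?_⟩
            rw [hu' x, huB x hxM]
            exact Hle _ _ (hfrB x hxM) (hfr' x) h3
  | negSingle y op c =>
      simp only [atomConst] at hc
      have hc' : (-c).natAbs ≤ M := by omega
      have hneg : (-(c:ℝ)) = (((-c : ℤ)):ℝ) := by push_cast; ring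
      cases op with
      | lt =>
          simp only [cond] at hcnd ⊢
          rw [hneg] at hcnd ⊢
          by_cases h1 : (((-c : ℤ)):ℝ) < (v' y:ℝ)
          · exact Or.inl (trlt' y (-c) h1)
          · push_neg at h1
            obtain ⟨h2, h3⟩ := hcnd.resolve_left (not_lt.mpr h1)
            have hyM : (v y:ℝ) ≤ (M:ℝ) := le_trans h2 (cM (-c) hc')
            right
            refine ⟨trle y (-c) hc' h2, ?_⟩
            rw [hu' y, huB y hyM]
            exact Hle _ _ (hfrB y hyM) (hfr' y) h3
      | le =>
          simp only [cond] at hcnd ⊢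
          rw [hneg] at hcnd ⊢
          by_cases h1 : (((-c : ℤ)):ℝ) ≤ (v' y:ℝ)
          · exact Or.inl (trge' y (-c) h1)
          · push_neg at h1
            have h2 : (v y:ℝ) ≤ (v' y:ℝ) := hcnd.resolve_left (not_le.mpr h1)
            have hyM : (v y:ℝ) ≤ (M:ℝ) := le_trans (le_trans h2 (le_of_lt h1)) (cM (-c) hc')
            right
            rw [hu' y, huB y hyM]
            exact Hle _ _ (hfrB y hyM) (hfr' y) h2
      | eq =>
          simp only [cond] at hcnd ⊢
          rw [hneg] at hcnd ⊢
          by_cases h1 : (((-c : ℤ)):ℝ) < (v y:ℝ)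
          · exact Or.inl (trlt y (-c) hc' h1)
          · push_neg at h1
            have h2 : (v' y:ℝ) = (v y:ℝ) := hcnd.resolve_left (not_lt.mpr h1)
            have hyM : (v y:ℝ) ≤ (M:ℝ) := le_trans h1 (cM (-c) hc')
            right
            rw [hu' y, huB y hyM, h2]
      | ge =>
          simp only [cond] at hcnd ⊢
          rw [hneg] at hcnd ⊢
          by_cases h1 : (((-c : ℤ)):ℝ) < (v y:ℝ)
          · exact Or.inl (trlt y (-c) hc' h1)
          · push_neg at h1
            have h2 : (v' y:ℝ) ≤ (v y:ℝ) := hcnd.resolve_left (not_lt.mpr h1)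
            have hyM : (v y:ℝ) ≤ (M:ℝ) := le_trans h1 (cM (-c) hc')
            right
            rw [hu' y, huB y hyM]
            exact Hle _ _ (hfr' y) (hfrB y hyM) h2
      | gt =>
          simp only [cond] at hcnd ⊢
          rw [hneg] at hcnd ⊢
          by_cases h1 : (((-c : ℤ)):ℝ) ≤ (v y:ℝ)
          · exact Or.inl (trge y (-c) hc' h1)
          · push_neg at h1
            have h2 : (v' y:ℝ) ≤ (v y:ℝ) := hcnd.resolve_left (not_le.mpr h1)
            have hyM : (v y:ℝ) ≤ (M:ℝ) := le_trans (le_of_lt h1) (cM (-c) hc')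
            right
            rw [hu' y, huB y hyM]
            exact Hle _ _ (hfr' y) (hfrB y hyM) h2
  | diag x y op c =>
      simp only [atomConst] at hc
      simp only [cond] at hcnd ⊢
      intro hu
      have hv1 : op.holds ((v x:ℝ) - (v y:ℝ)) (c:ℝ) :=
        holds_transfer ((hprof c hc).2 x y).1.symm ((hprof c hc).2 x y).2.symm op hu
      have hv2 := hcnd hv1
      exact holds_transfer (hP2 x y c).1 (hP2 x y c).2 op hv2

end TFin
namespace TFin
open Timed

lemma atomsOf_finite {X : Type} (g : ClockConstraint X) : (atomsOf g).Finite := by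
  induction g with
  | tt => exact Set.finite_empty
  | single x op c => exact Set.finite_singleton _
  | diag x y op c => exact Set.finite_singleton _
  | conj g1 g2 ih1 ih2 => exact ih1.union ih2

lemma preAtom_const {X : Type} {Y : Set X} {φ ψ : Atom X} (h : φ ∈ preAtom Y ψ) :
    atomConst φ = atomConst ψ := by
  cases ψ <;> simp only [preAtom] at h <;> split_ifs at h <;>
    first
      | exact absurd h (Set.notMem_empty _)
      | (rw [Set.mem_singleton_iff] at h; subst h; rfl)

lemma cmapStep_mono {Q X : Type} (A : Automaton Q X) :
    Monotone (cmapStep A) := by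
  intro G1 G2 h q φ hφ
  obtain ⟨g, Y, q', ht, hor⟩ := hφ
  refine ⟨g, Y, q', ht, ?_⟩
  rcases hor with h1 | ⟨ψ, hψ, hpre⟩
  · exact Or.inl h1
  · exact Or.inr ⟨ψ, h q' hψ, hpre⟩

lemma G_bounded {Q X : Type} (A : Automaton Q X) (hT : A.trans.Finite)
    (G : Q → Set (Atom X)) (hfix : cmapStep A G = G)
    (hleast : ∀ G' : Q → Set (Atom X), cmapStep A G' = G' → ∀ q, G q ⊆ G' q) :
    ∃ M : ℕ, ∀ q, ∀ φ ∈ G q, (atomConst φ).natAbs ≤ M := by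
  classical
  set C : Set ℤ := ⋃ t ∈ A.trans, atomConst '' atomsOf t.2.1 with hC
  have hCfin : C.Finite := hT.biUnion (fun t _ => (atomsOf_finite t.2.1).image _)
  set F : (Q → Set (Atom X)) →o (Q → Set (Atom X)) := ⟨cmapStep A, cmapStep_mono A⟩
    with hF
  have hfixlfp : cmapStep A (OrderHom.lfp F) = OrderHom.lfp F := OrderHom.map_lfp F
  have hG1 : G ≤ OrderHom.lfp F := fun q => hleast _ hfixlfp q
  have hG2 : OrderHom.lfp F ≤ G := OrderHom.lfp_le F (le_of_eq hfix)
  set H : Q → Set (Atom X) := fun q => G q ∩ {φ | atomConst φ ∈ C} with hH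
  have hpre : F H ≤ H := by
    intro q φ hφ
    obtain ⟨g, Y, q', ht, hor⟩ := hφ
    constructor
    · rw [← hfix]
      refine ⟨g, Y, q', ht, ?_⟩
      rcases hor with h1 | ⟨ψ, hψ, hp⟩
      · exact Or.inl h1
      · exact Or.inr ⟨ψ, hψ.1, hp⟩
    · rcases hor with h1 | ⟨ψ, hψ, hp⟩
      · refine Set.mem_biUnion ht ?_
        exact Set.mem_image_of_mem _ h1
      · show atomConst φ ∈ C
        rw [preAtom_const hp]
        exact hψ.2
  have hGH : G ≤ H := le_trans hG1 (OrderHom.lfp_le F hpre)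
  -- extract bound
  have hfin2 : (Int.natAbs '' C).Finite := hCfin.image _
  obtain ⟨M, hM⟩ := hfin2.bddAbove
  refine ⟨M, fun q φ hφ => ?_⟩
  have h1 : atomConst φ ∈ C := (hGH q hφ).2
  exact hM (Set.mem_image_of_mem _ h1)

/-! ### Profiles as a finite type -/

def profMap {X : Type} (M : ℕ) (v : Val X) :
    Fin (2*M+1) → ((X → Prop × Prop) × (X → X → Prop × Prop)) :=
  fun i =>
    ((fun x => (((v x:ℝ) < ((((i:ℕ):ℤ) - M : ℤ):ℝ)), ((v x:ℝ) = ((((i:ℕ):ℤ) - M : ℤ):ℝ)))),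
     (fun x y => (((v x:ℝ) - (v y:ℝ) < ((((i:ℕ):ℤ) - M : ℤ):ℝ)),
       ((v x:ℝ) - (v y:ℝ) = ((((i:ℕ):ℤ) - M : ℤ):ℝ)))))

lemma profMap_eq_prof {X : Type} {M : ℕ} {u v : Val X}
    (h : profMap M v = profMap M u) : Prof M u v := by
  intro c hc
  have hi : ((c + M).toNat) < 2*M+1 := by omega
  have h2 := congrFun h ⟨(c+M).toNat, hi⟩
  have hval : ((((⟨(c+M).toNat, hi⟩ : Fin (2*M+1)):ℕ):ℤ) - M : ℤ) = c := by
    simp only [Fin.val_mk]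
    omega
  rw [profMap, profMap] at h2
  simp only [hval] at h2
  have hfst := congrArg Prod.fst h2
  have hsnd := congrArg Prod.snd h2
  constructor
  · intro x
    have h3 := congrFun hfst x
    rw [Prod.ext_iff] at h3
    exact ⟨iff_of_eq h3.1, iff_of_eq h3.2⟩
  · intro x y
    have h3 := congrFun (congrFun hsnd x) y
    rw [Prod.ext_iff] at h3
    exact ⟨iff_of_eq h3.1, iff_of_eq h3.2⟩

lemma cond_refl {X : Type} (φ : Atom X) (v : Val X) : cond φ v v :=
  (atom_iff φ v v).mp (fun _ h => h)

end TFin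
/-- the `G`-preorder is finite on symbolic states. -/
theorem gpre_is_finite {Q X : Type} [Fintype Q] [Fintype X]
    (A : Automaton Q X) (hT : A.trans.Finite)
    (G : Q → Set (Atom X))
    (hfix : cmapStep A G = G)
    (hleast : ∀ G' : Q → Set (Atom X), cmapStep A G' = G' → ∀ q, G q ⊆ G' q)
    (seq : ℕ → Q × Set (Val X))
    (hsymb : ∀ n, IsZone (seq n).2 ∧ (seq n).2 ≠ ∅) :
    ∃ i j : ℕ, i < j ∧ (seq i).1 = (seq j).1 ∧
      ∀ v ∈ (seq j).2, ∃ v' ∈ (seq i).2, GPre G ((seq j).1, v) ((seq i).1, v') := by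
  classical
  obtain ⟨M, hM⟩ := TFin.G_bounded A hT G hfix hleast
  set dn : ℕ → Q × Set (Fin (2*M+1) → ((X → Prop × Prop) × (X → X → Prop × Prop))) :=
    fun n => ((seq n).1,
      (fun v => TFin.profMap M v) ''
        {v | ∃ v' ∈ (seq n).2, ∀ φ ∈ G (seq n).1, TFin.cond φ v v'}) with hdn
  have hfin : Finite (Q × Set (Fin (2*M+1) → ((X → Prop × Prop) × (X → X → Prop × Prop)))) :=
    inferInstance
  have main : ∀ a b : ℕ, a < b → dn a = dn b →
      ∃ i j : ℕ, i < j ∧ (seq i).1 = (seq j).1 ∧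
        ∀ v ∈ (seq j).2, ∃ v' ∈ (seq i).2, GPre G ((seq j).1, v) ((seq i).1, v') := by
    intro a b hab hd
    have hq : (seq a).1 = (seq b).1 := by
      have := congrArg Prod.fst hd
      simpa [hdn] using this
    have hsets := congrArg Prod.snd hd
    simp only [hdn] at hsets
    refine ⟨a, b, hab, hq, ?_⟩
    intro v hv
    -- v is in its own down-set at index b
    have hvD : TFin.profMap M v ∈ (fun v => TFin.profMap M v) ''
        {w | ∃ v' ∈ (seq b).2, ∀ φ ∈ G (seq b).1, TFin.cond φ w v'} :=
      Set.mem_image_of_mem _ ⟨v, hv, fun φ _ => TFin.cond_refl φ v⟩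
    rw [← hsets] at hvD
    obtain ⟨w, hwmem, hweq⟩ := hvD
    obtain ⟨w', hw'Z, hwcond⟩ := hwmem
    -- the zone at index a
    obtain ⟨ga, hga⟩ := (hsymb a).1
    have hw'sat : ga.sat w' := by
      rw [hga] at hw'Z
      exact hw'Z
    have hprof : TFin.Prof M v w := TFin.profMap_eq_prof hweq
    obtain ⟨u', hu'sat, hu'cond⟩ := TFin.key (G (seq a).1) (hM (seq a).1) ga v w w'
      hw'sat hwcond hprof
    refine ⟨u', by rw [hga]; exact hu'sat, ?_⟩
    constructor
    · exact hq.symm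
    · intro δ φ hφ
      have hφ' : φ ∈ G (seq a).1 := by
        rw [hq]
        exact hφ
      exact (TFin.atom_iff φ v u').mpr (hu'cond φ hφ') δ
  obtain ⟨i, j, hne, hdata⟩ := Finite.exists_ne_map_eq_of_infinite dn
  rcases lt_or_gt_of_ne hne with hij | hij
  · exact main i j hij hdata
  · exact main j i hij hdata.symm
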